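/- Let p ≥ 1 and let R : ℝ^n → ℝ be a convex, continuous, even, positively p-homogeneous function (hence R ≥ 0). Then for all f, g ∈ ℝ^n, all r(f) ∈ ∂R(f) and all r(g) ∈ ∂R(g): |⟨r(f), g⟩| ≤ ⟨r(f), f⟩^{1−1/p} · ⟨r(g), g⟩^{1/p} = p · R(f)^{1−1/p} · R(g)^{1/p}. -/

import Mathlib

open Finset

/-- Euclidean inner product on `Fin n → ℝ`. -/
def ip {n : ℕ} (x y : Fin n → ℝ) : ℝ := ∑ i, x i * y i

/-- Subdifferential of a convex function `R : ℝ^n → ℝ` at `x`. -/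
def subdiff {n : ℕ} (R : (Fin n → ℝ) → ℝ) (x : Fin n → ℝ) : Set (Fin n → ℝ) :=
  {r | ∀ y, R x + ip r (y - x) ≤ R y}

/-- `G` is positively `p`-homogeneous: `G (γ • x) = γ^p * G x` for all `γ ≥ 0`. -/
def PosHomog {n : ℕ} (p : ℝ) (G : (Fin n → ℝ) → ℝ) : Prop :=
  ∀ γ : ℝ, 0 ≤ γ → ∀ x, G (γ • x) = γ ^ p * G x

/-- Hölder-type inequality (generalization of a result of Zarantonello): for a convex,
continuous, even, positively `p`-homogeneous `R` (`p ≥ 1`), any `f, g` and any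
subgradients `r(f) ∈ ∂R(f)`, `r(g) ∈ ∂R(g)`:
`|⟨r(f), g⟩| ≤ ⟨r(f), f⟩^(1−1/p) ⟨r(g), g⟩^(1/p) = p · R(f)^(1−1/p) R(g)^(1/p)`. -/
lemma ip_sub {n : ℕ} (r x y : Fin n → ℝ) : ip r (x - y) = ip r x - ip r y := by
  simp [ip, mul_sub, Finset.sum_sub_distrib]

lemma ip_smul {n : ℕ} (r : Fin n → ℝ) (t : ℝ) (x : Fin n → ℝ) : ip r (t • x) = t * ip r x := by
  simp [ip, Finset.mul_sum]; ring_nf; simp [mul_comm, mul_left_comm]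

lemma ip_neg {n : ℕ} (r x : Fin n → ℝ) : ip r (-x) = - ip r x := by
  simp [ip]

lemma euler {n : ℕ} (p : ℝ) (R : (Fin n → ℝ) → ℝ) (hhom : PosHomog p R)
    (x r : Fin n → ℝ) (hr : r ∈ subdiff R x) : ip r x = p * R x := by
  set c := ip r x with hc
  have key : ∀ t : ℝ, 0 ≤ t → 0 ≤ (t ^ p - 1) * R x - (t - 1) * c := by
    intro t ht
    have h := hr (t • x)
    rw [hhom t ht x, ip_sub, ip_smul, ← hc] at h
    nlinarith
  have hderiv : HasDerivAt (fun t : ℝ => (t ^ p - 1) * R x - (t - 1) * c) (p * R x - c) 1 := by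
    have h1 : HasDerivAt (fun t : ℝ => t ^ p) (p * (1:ℝ) ^ (p - 1)) 1 :=
      Real.hasDerivAt_rpow_const (Or.inl one_ne_zero)
    have h2 := ((h1.sub_const 1).mul_const (R x)).sub (((hasDerivAt_id 1).sub_const 1).mul_const c)
    have h3 : HasDerivAt (fun t : ℝ => (t ^ p - 1) * R x - (t - 1) * c)
        (p * (1:ℝ) ^ (p - 1) * R x - 1 * c) 1 := h2
    simpa using h3
  have hmin : IsLocalMin (fun t : ℝ => (t ^ p - 1) * R x - (t - 1) * c) 1 := by
    have hev : ∀ᶠ t in nhds (1:ℝ), 0 ≤ t := by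
      filter_upwards [eventually_gt_nhds (by norm_num : (0:ℝ) < 1)] with t ht using le_of_lt ht
    filter_upwards [hev] with t ht
    simpa using key t ht
  have h0 := hmin.hasDerivAt_eq_zero hderiv
  linarith

theorem hoelder_type_inequality {n : ℕ} (p : ℝ) (hp : 1 ≤ p) (R : (Fin n → ℝ) → ℝ)
    (hconvex : ConvexOn ℝ Set.univ R) (hcont : Continuous R)
    (heven : ∀ x, R (-x) = R x) (hhom : PosHomog p R)
    (f g : Fin n → ℝ) (rf : Fin n → ℝ) (hrf : rf ∈ subdiff R f)
    (rg : Fin n → ℝ) (hrg : rg ∈ subdiff R g) :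
    |ip rf g| ≤ (ip rf f) ^ (1 - 1/p) * (ip rg g) ^ (1/p) ∧
    (ip rf f) ^ (1 - 1/p) * (ip rg g) ^ (1/p) = p * (R f) ^ (1 - 1/p) * (R g) ^ (1/p) := by
  have hppos : (0:ℝ) < p := lt_of_lt_of_le one_pos hp
  have hpne : p ≠ 0 := ne_of_gt hppos
  have h00 : R 0 = 0 := by
    have h := hhom 0 le_rfl 0
    rw [smul_zero, Real.zero_rpow hpne, zero_mul] at h
    exact h
  have hR : ∀ x, 0 ≤ R x := by
    intro x
    have h := hconvex.2 (Set.mem_univ x) (Set.mem_univ (-x))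
      (by norm_num : (0:ℝ) ≤ 1/2) (by norm_num : (0:ℝ) ≤ 1/2) (by norm_num)
    have hx0 : (1/2:ℝ) • x + (1/2:ℝ) • (-x) = 0 := by module
    rw [hx0, h00, heven] at h
    simp only [smul_eq_mul] at h
    linarith
  set A := R f with hA'
  set B := R g with hB'
  have hA : 0 ≤ A := hR f
  have hB : 0 ≤ B := hR g
  have eulf : ip rf f = p * A := euler p R hhom f rf hrf
  have eulg : ip rg g = p * B := euler p R hhom g rg hrg
  set c := ip rf g with hc
  have key : ∀ γ : ℝ, 0 < γ → |c| * γ ≤ γ ^ p * B + (p - 1) * A := by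
    intro γ hγ
    have h1 := hrf (γ • g)
    have h2 := hrf (-(γ • g))
    rw [hhom γ hγ.le g, ip_sub, ip_smul, eulf, ← hc] at h1
    rw [heven, hhom γ hγ.le g, ip_sub, ip_neg, ip_smul, eulf, ← hc] at h2
    rcases le_or_gt 0 c with h | h
    · rw [abs_of_nonneg h]; nlinarith
    · rw [abs_of_neg h]; nlinarith
  -- main bound
  have main : |c| ≤ p * A ^ (1 - 1/p) * B ^ (1/p) := by
    rcases eq_or_lt_of_le hB with hB0 | hBpos
    · -- B = 0
      have hB0 : B = 0 := hB0.symm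
      have hcz : |c| ≤ 0 := by
        by_contra hcon
        push_neg at hcon
        have hnum : (0:ℝ) < (p - 1) * A + 1 := by nlinarith
        have hγ : (0:ℝ) < ((p - 1) * A + 1) / |c| := div_pos hnum hcon
        have hthis := key _ hγ
        rw [hB0, mul_zero, zero_add, mul_comm, div_mul_cancel₀ _ (ne_of_gt hcon)] at hthis
        linarith
      have : 0 ≤ p * A ^ (1 - 1/p) * B ^ (1/p) := by positivity
      linarith
    · rcases eq_or_lt_of_le hA with hA0 | hApos
      · -- A = 0
        have hA0 : A = 0 := hA0.symm
        rcases eq_or_lt_of_le hp with hp1 | hp1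
        · -- p = 1
          have h1 := key 1 one_pos
          rw [Real.one_rpow, one_mul, mul_one] at h1
          rw [hA0, ← hp1]
          simp only [one_div, inv_one, sub_self, Real.rpow_zero, Real.rpow_one, one_mul, mul_one]
          nlinarith
        · -- p > 1 : show |c| ≤ 0
          have hcz : |c| ≤ 0 := by
            by_contra hcon
            push_neg at hcon
            have hbase : (0:ℝ) < |c| / (2 * B) := div_pos hcon (by linarith)
            set γ := (|c| / (2 * B)) ^ (1 / (p - 1)) with hγdef
            have hγpos : 0 < γ := Real.rpow_pos_of_pos hbase _
            have hγp1 : γ ^ (p - 1) = |c| / (2 * B) := by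
              rw [hγdef, ← Real.rpow_mul hbase.le, one_div,
                inv_mul_cancel₀ (by linarith : p - 1 ≠ 0), Real.rpow_one]
            have hγp : γ ^ p = γ ^ (p - 1) * γ := by
              have h := Real.rpow_add hγpos (p - 1) 1
              rw [Real.rpow_one, sub_add_cancel] at h
              exact h
            have hk := key γ hγpos
            rw [hA0, mul_zero, add_zero, hγp, hγp1] at hk
            have : |c| * γ ≤ |c| / 2 * γ := by
              have : |c| / (2 * B) * γ * B = |c| / 2 * γ := by
                field_simp
              linarith [this ▸ hk]
            nlinarith
          have : 0 ≤ p * A ^ (1 - 1/p) * B ^ (1/p) := by positivity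
          linarith
      · -- A > 0, B > 0
        have hbase : (0:ℝ) < A / B := div_pos hApos hBpos
        set γ := (A / B) ^ (1/p) with hγdef
        have hγpos : 0 < γ := Real.rpow_pos_of_pos hbase _
        have hγp : γ ^ p = A / B := by
          rw [hγdef, ← Real.rpow_mul hbase.le, one_div, inv_mul_cancel₀ hpne, Real.rpow_one]
        have hk := key γ hγpos
        rw [hγp, div_mul_cancel₀ _ (ne_of_gt hBpos)] at hk
        have hk2 : |c| * γ ≤ p * A := by linarith
        have hγeq : γ = A ^ (1/p) / B ^ (1/p) := by
          rw [hγdef, Real.div_rpow hA hB]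
        have hAexp : A ^ (1 - 1/p) * A ^ (1/p) = A := by
          rw [← Real.rpow_add hApos]; norm_num
        have hBne : B ^ (1/p) ≠ 0 := ne_of_gt (Real.rpow_pos_of_pos hBpos _)
        have hrhs : p * A ^ (1 - 1/p) * B ^ (1/p) * γ = p * A := by
          rw [hγeq]
          have hstep : p * A ^ (1 - 1/p) * B ^ (1/p) * (A ^ (1/p) / B ^ (1/p))
              = p * (A ^ (1 - 1/p) * A ^ (1/p)) * (B ^ (1/p) / B ^ (1/p)) := by ring
          rw [hstep, hAexp, div_self hBne, mul_one]
        have hfin : |c| * γ ≤ (p * A ^ (1 - 1/p) * B ^ (1/p)) * γ := by rw [hrhs]; exact hk2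
        exact le_of_mul_le_mul_right hfin hγpos
  have e2 : (p * A) ^ (1 - 1/p) * (p * B) ^ (1/p) = p * A ^ (1 - 1/p) * B ^ (1/p) := by
    rw [Real.mul_rpow hppos.le hA, Real.mul_rpow hppos.le hB]
    have : p ^ (1 - 1/p) * p ^ (1/p) = p := by
      rw [← Real.rpow_add hppos]; norm_num
    calc p ^ (1 - 1/p) * A ^ (1 - 1/p) * (p ^ (1/p) * B ^ (1/p))
        = (p ^ (1 - 1/p) * p ^ (1/p)) * (A ^ (1 - 1/p) * B ^ (1/p)) := by ring
      _ = p * A ^ (1 - 1/p) * B ^ (1/p) := by rw [this]; ring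
  constructor
  · rw [eulf, eulg, e2]; exact main
  · rw [eulf, eulg]; exact e2
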